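/- For f ∈ N_0^{(r,n)} with γ := π(f) and λ := λ(f) (as in the Garsia–Gessel type bijection for G(r,n)), one has max(f) = max(λ) + des_G(γ) and |f| = |λ| + n·des_G(γ) − maj(γ), where max(f) = max_i f_i, |f| = Σ_i f_i, des_G(γ) = |Des_G(γ)|, and maj(γ) = Σ_{i ∈ Des_G(γ)} i. -/
import Mathlib


open Finset

namespace Paper

/-- An element of `G(r,n) = ℤ_r ≀ S_n`: a pair (underlying permutation, color vector). -/
abbrev CPerm (r n : ℕ) := Equiv.Perm (Fin n) × (Fin n → Fin r)

/-- A colored sequence: values and colors. -/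
abbrev CSeq (r n : ℕ) := (Fin n → ℕ) × (Fin n → Fin r)

variable {r n : ℕ}

/-- The order on colored integers (value, color):
`n^{r-1} < ⋯ < n^1 < ⋯ < 1^{r-1} < ⋯ < 1^1 < 0 < 1 < ⋯ < n`.
`clt a b` means `a < b`. -/
def clt (a b : ℕ × ℕ) : Prop :=
  (0 < a.2 ∧ b.2 = 0) ∨
  (0 < a.2 ∧ 0 < b.2 ∧ (b.1 < a.1 ∨ (a.1 = b.1 ∧ b.2 < a.2))) ∨
  (a.2 = 0 ∧ b.2 = 0 ∧ a.1 < b.1)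

instance (a b : ℕ × ℕ) : Decidable (clt a b) := by unfold clt; exact inferInstance

/-- The colored entry of `γ` at (0-based) position `i`: value `σ(i)` (1-based) with its color. -/
def entry (γ : CPerm r n) (i : Fin n) : ℕ × ℕ := ((γ.1 i : ℕ) + 1, (γ.2 i : ℕ))

/-- Window value `γ(i)` for `i ∈ [0,n]` (1-based positions), with `γ(0) := 0`. -/
def wval (γ : CPerm r n) (i : ℕ) : ℕ × ℕ :=
  if h : 1 ≤ i ∧ i ≤ n then ((γ.1 ⟨i - 1, by omega⟩ : ℕ) + 1, (γ.2 ⟨i - 1, by omega⟩ : ℕ))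
  else (0, 0)

/-- Descent set `Des_G(γ) = {i ∈ [0,n-1] : γ(i) > γ(i+1)}`, with `γ(0) := 0`. -/
def DesG (γ : CPerm r n) : Finset ℕ :=
  (range n).filter fun i => clt (wval γ (i + 1)) (wval γ i)

def desG (γ : CPerm r n) : ℕ := (DesG γ).card

def majG (γ : CPerm r n) : ℕ := ∑ i ∈ DesG γ, i

def colG (γ : CPerm r n) : ℕ := ∑ i, (γ.2 i : ℕ)

/-- Number of inversions: pairs `i < j` with `γ(i) > γ(j)` in the colored order. -/
def invG (γ : CPerm r n) : ℕ :=
  ((univ : Finset (Fin n × Fin n)).filter fun p =>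
    p.1 < p.2 ∧ clt (entry γ p.2) (entry γ p.1)).card

/-- Length `ℓ_G(γ) = inv(γ) + Σ_{c_i ≠ 0} (σ(i) + c_i - 1)` (σ(i) 1-based). -/
def lenG (γ : CPerm r n) : ℕ :=
  invG γ + ∑ i ∈ univ.filter (fun i => (γ.2 i : ℕ) ≠ 0), ((γ.1 i : ℕ) + (γ.2 i : ℕ))

/-- Membership in `N_0^{(r,n)}`: a zero value has color 0. -/
def ValidSeq (f : CSeq r n) : Prop := ∀ i, f.1 i = 0 → (f.2 i : ℕ) = 0

/-- The defining property of `π(f) = γ = (c;σ)`: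
`f_{σ(1)} ≤ … ≤ f_{σ(n)}`, `c_i(γ) = c_{σ(i)}(f)`, and `γ(i) < γ(i+1)` whenever
`f_{σ(i)} = f_{σ(i+1)}`. -/
def isPi (f : CSeq r n) (γ : CPerm r n) : Prop :=
  (∀ i j : Fin n, i ≤ j → f.1 (γ.1 i) ≤ f.1 (γ.1 j)) ∧
  (∀ i, γ.2 i = f.2 (γ.1 i)) ∧
  (∀ i j : Fin n, (i : ℕ) + 1 = (j : ℕ) → f.1 (γ.1 i) = f.1 (γ.1 j) →
    clt (entry γ i) (entry γ j))

def maxf (f : CSeq r n) : ℕ := univ.sup f.1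

def sumf (f : CSeq r n) : ℕ := ∑ i, f.1 i

/-- The partition `λ(f)` (relative to `γ = π(f)`), with values in `ℤ`:
`λ_i = f_{σ(i)} - #{j ∈ Des_G(γ) : j ≤ i-1}` (1-based `i`). -/
def lamZ (f : CSeq r n) (γ : CPerm r n) (i : Fin n) : ℤ :=
  (f.1 (γ.1 i) : ℤ) - ((DesG γ).filter (· ≤ (i : ℕ))).card

/-- 1-based reading of an `n`-tuple, with value `0` at index `0` (and outside `[1,n]`). -/
def mval (μ : Fin n → ℕ) (i : ℕ) : ℕ :=
  if h : 1 ≤ i ∧ i ≤ n then μ ⟨i - 1, by omega⟩ else 0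

/-- `μ` is `γ`-compatible: `μ_i < μ_{i+1}` for all `i ∈ Des_G(γ)` (with `μ_0 := 0`). -/
def compat (μ : Fin n → ℕ) (γ : CPerm r n) : Prop :=
  ∀ i ∈ DesG γ, mval μ i < mval μ (i + 1)

/-- The skew inverse `γ̃⁻¹ = (c_{σ⁻¹(1)},…,c_{σ⁻¹(n)}; σ⁻¹)`. -/
def skewInv (γ : CPerm r n) : CPerm r n := (γ.1⁻¹, fun i => γ.2 (γ.1⁻¹ i))

/-- The group inverse: `γ⁻¹ = (c'; σ⁻¹)` with `c'_i = (r - c_{σ⁻¹(i)}) mod r`. -/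
def cinv (γ : CPerm r n) : CPerm r n :=
  (γ.1⁻¹, fun i =>
    ⟨(r - (γ.2 (γ.1⁻¹ i) : ℕ)) % r,
      Nat.mod_lt _ (Nat.lt_of_le_of_lt (Nat.zero_le _) (γ.2 (γ.1⁻¹ i)).isLt)⟩)

/-- The group law of `G(r,n)`: `(c;σ)·(d;τ) = ((d_i + c_{τ(i)}) mod r; στ)`. -/
def cmul (x y : CPerm r n) : CPerm r n :=
  (x.1 * y.1, fun i =>
    ⟨((y.2 i : ℕ) + (x.2 (y.1 i) : ℕ)) % r,
      Nat.mod_lt _ (Nat.lt_of_le_of_lt (Nat.zero_le _) (y.2 i).isLt)⟩)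

/-- The color-forgetting projection `φ : G(r,n) → B_n = G(2,n)`. -/
def phi (γ : CPerm r n) : CPerm 2 n := (γ.1, fun i => ⟨min (γ.2 i : ℕ) 1, by omega⟩)

/-- `[m]_p = 1 + p + ⋯ + p^{m-1}`. -/
def qint {R : Type*} [CommRing R] (p : R) (m : ℕ) : R := ∑ j ∈ range m, p ^ j

/-- `[m]_p! = [1]_p [2]_p ⋯ [m]_p`. -/
def qfact {R : Type*} [CommRing R] (p : R) (m : ℕ) : R := ∏ j ∈ range m, qint p (j + 1)

/-- `[m̂]_{b,p}! = (1+bp)(1+bp²)⋯(1+bp^m)·[m]_p!`. -/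
def hqfact {R : Type*} [CommRing R] (b p : R) (m : ℕ) : R :=
  (∏ i ∈ range m, (1 + b * p ^ (i + 1))) * qfact p m

/-- A formal power series in two variables `X 0, X 1` from its coefficients. -/
def seriesOf2 (F : ℕ → ℕ → ℚ) : MvPowerSeries (Fin 2) ℚ := fun d => F (d 0) (d 1)

/-- A formal power series in three variables from its coefficients. -/
def seriesOf3 (F : ℕ → ℕ → ℕ → ℚ) : MvPowerSeries (Fin 3) ℚ := fun d => F (d 0) (d 1) (d 2)


lemma clt_asymm (a b : ℕ × ℕ) : clt a b → clt b a → False := by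
  obtain ⟨a1, a2⟩ := a; obtain ⟨b1, b2⟩ := b
  simp only [clt]; omega

lemma wval_eq (γ : CPerm r n) (k : ℕ) (hk : k < n) :
    wval γ (k + 1) = entry γ ⟨k, hk⟩ := by
  rw [wval, dif_pos ⟨by omega, by omega⟩]; rfl

lemma mem_DesG {γ : CPerm r n} {j : ℕ} :
    j ∈ DesG γ ↔ j < n ∧ clt (wval γ (j + 1)) (wval γ j) := by
  simp [DesG]

/-- If `k+1` is a descent of `γ = π(f)` then `f` strictly increases there. -/
lemma des_strict {f : CSeq r n} {γ : CPerm r n} (hγ : isPi f γ)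
    (k : ℕ) (hk : k + 1 < n) (hd : k + 1 ∈ DesG γ) :
    f.1 (γ.1 ⟨k, by omega⟩) < f.1 (γ.1 ⟨k + 1, hk⟩) := by
  have hc := (mem_DesG.1 hd).2
  rw [wval_eq γ (k + 1) hk, wval_eq γ k (by omega)] at hc
  have hle : f.1 (γ.1 ⟨k, by omega⟩) ≤ f.1 (γ.1 ⟨k + 1, hk⟩) :=
    hγ.1 _ _ (by simp [Fin.le_def])
  rcases lt_or_eq_of_le hle with h | h
  · exact h
  · exact absurd (hγ.2.2 ⟨k, by omega⟩ ⟨k + 1, hk⟩ rfl h) (fun h' => clt_asymm _ _ h' hc)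

lemma filter_card_succ (s : Finset ℕ) (k : ℕ) :
    (s.filter (· ≤ k + 1)).card =
      (s.filter (· ≤ k)).card + (if k + 1 ∈ s then 1 else 0) := by
  rw [Finset.card_filter, Finset.card_filter]
  have : ∀ j ∈ s, (if j ≤ k + 1 then 1 else 0) =
      (if j ≤ k then 1 else 0) + (if j = k + 1 then 1 else 0) := by
    intro j _; split_ifs <;> omega
  rw [Finset.sum_congr rfl this, Finset.sum_add_distrib, Finset.sum_ite_eq' s (k + 1)]

/-- `λ` is weakly increasing step by step. -/
lemma lam_step {f : CSeq r n} {γ : CPerm r n} (hγ : isPi f γ)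
    (k : ℕ) (hk : k + 1 < n) :
    lamZ f γ ⟨k, by omega⟩ ≤ lamZ f γ ⟨k + 1, hk⟩ := by
  unfold lamZ
  rw [filter_card_succ (DesG γ) k]
  by_cases hd : k + 1 ∈ DesG γ
  · have := des_strict hγ k hk hd
    simp only [hd, if_true]
    push_cast
    omega
  · have hle : f.1 (γ.1 ⟨k, by omega⟩) ≤ f.1 (γ.1 ⟨k + 1, hk⟩) :=
      hγ.1 _ _ (by simp [Fin.le_def])
    simp only [hd, if_false]
    push_cast
    omega

lemma lam_mono {f : CSeq r n} {γ : CPerm r n} (hγ : isPi f γ) :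
    ∀ b (hb : b < n) a (ha : a ≤ b), lamZ f γ ⟨a, by omega⟩ ≤ lamZ f γ ⟨b, hb⟩ := by
  intro b
  induction b with
  | zero =>
    intro hb a ha
    have : a = 0 := by omega
    subst this; exact le_refl _
  | succ m ih =>
    intro hb a ha
    rcases Nat.lt_or_ge a (m + 1) with h | h
    · exact le_trans (ih (by omega) a (by omega)) (lam_step hγ m hb)
    · have : a = m + 1 := by omega
      subst this; exact le_refl _

lemma sum_indicator (m j : ℕ) (hj : j ≤ m) :
    ∑ i ∈ range m, (if j ≤ i then (1 : ℤ) else 0) = (m : ℤ) - j := by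
  induction m with
  | zero => simp; omega
  | succ k ih =>
    rw [Finset.sum_range_succ]
    rcases Nat.lt_or_ge j (k + 1) with h | h
    · rw [ih (by omega), if_pos (by omega)]; push_cast; ring
    · have : j = k + 1 := by omega
      subst this
      rw [if_neg (by omega), Finset.sum_eq_zero (fun i hi => by
        rw [if_neg]; simp at hi; omega)]
      push_cast; ring

/-- Proposition 3.6, equations (3.4)-(3.5): for `f ∈ N_0^{(r,n)}` with
`γ = π(f)` and `λ = λ(f)`, one has `max(f) = max(λ) + des_G(γ)` and
`|f| = |λ| + n·des_G(γ) − maj(γ)`. -/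
theorem stmt1 (r n : ℕ) (hr : 0 < r) (hn : 0 < n)
    (π : CSeq r n → CPerm r n)
    (hπ : ∀ f, ValidSeq f → isPi f (π f) ∧ ∀ γ, isPi f γ → γ = π f)
    (f : CSeq r n) (hf : ValidSeq f) :
    (maxf f : ℤ) =
      univ.sup' ((Finset.univ_nonempty_iff).2 (Fin.pos_iff_nonempty.1 hn)) (lamZ f (π f))
        + desG (π f) ∧
    (sumf f : ℤ) = (∑ i, lamZ f (π f) i) + n * desG (π f) - majG (π f) := by
  set γ := π f with hγdef
  have hγ : isPi f γ := (hπ f hf).1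
  have hne : (univ : Finset (Fin n)).Nonempty :=
    (Finset.univ_nonempty_iff).2 (Fin.pos_iff_nonempty.1 hn)
  set last : Fin n := ⟨n - 1, by omega⟩ with hlast
  -- Des ⊆ range n, so every descent is ≤ n-1
  have hDes_le : ∀ j ∈ DesG γ, j ≤ (last : ℕ) := by
    intro j hj
    have := (mem_DesG.1 hj).1
    simp only [hlast]; omega
  have hfilter : (DesG γ).filter (· ≤ (last : ℕ)) = DesG γ :=
    Finset.filter_true_of_mem hDes_le
  have hlam_last : lamZ f γ last = (f.1 (γ.1 last) : ℤ) - desG γ := by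
    unfold lamZ; rw [hfilter]; rfl
  -- max f = f (σ last)
  have hmax : maxf f = f.1 (γ.1 last) := by
    apply le_antisymm
    · apply Finset.sup_le
      intro i _
      have := hγ.1 (γ.1⁻¹ i) last (by
        simp only [Fin.le_def, hlast]
        omega)
      simpa using this
    · exact Finset.le_sup (Finset.mem_univ _)
  -- sup' of lamZ is lamZ last
  have hsup : univ.sup' hne (lamZ f γ) = lamZ f γ last := by
    apply le_antisymm
    · apply Finset.sup'_le
      intro i _
      have := lam_mono hγ (n - 1) (by omega) (i : ℕ) (by omega)
      have hi : (⟨(i : ℕ), by omega⟩ : Fin n) = i := rfl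
      rwa [hi] at this
    · exact Finset.le_sup' _ (Finset.mem_univ _)
  constructor
  · rw [hmax, hsup, hlam_last]; ring
  · -- sum identity
    have hsumf : (sumf f : ℤ) = ∑ i, (f.1 (γ.1 i) : ℤ) := by
      rw [sumf]
      push_cast
      exact (Equiv.sum_comp γ.1 (fun i => (f.1 i : ℤ))).symm
    have hsum_lam : ∑ i, lamZ f γ i =
        (∑ i, (f.1 (γ.1 i) : ℤ)) -
          ∑ i : Fin n, (((DesG γ).filter (· ≤ (i : ℕ))).card : ℤ) := by
      unfold lamZ; rw [Finset.sum_sub_distrib]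
    have hcount : ∑ i : Fin n, (((DesG γ).filter (· ≤ (i : ℕ))).card : ℤ) =
        (n : ℤ) * desG γ - majG γ := by
      have h1 : ∀ i : Fin n, (((DesG γ).filter (· ≤ (i : ℕ))).card : ℤ) =
          ∑ j ∈ DesG γ, (if j ≤ (i : ℕ) then (1 : ℤ) else 0) := by
        intro i
        rw [Finset.card_filter]
        push_cast
        rfl
      rw [Finset.sum_congr rfl (fun i _ => h1 i), Finset.sum_comm]
      have h2 : ∀ j ∈ DesG γ,
          ∑ i : Fin n, (if j ≤ (i : ℕ) then (1 : ℤ) else 0) = (n : ℤ) - j := by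
        intro j hj
        have hjn := (mem_DesG.1 hj).1
        rw [Fin.sum_univ_eq_sum_range (fun i => if j ≤ i then (1 : ℤ) else 0)]
        exact sum_indicator n j (by omega)
      rw [Finset.sum_congr rfl h2, Finset.sum_sub_distrib, Finset.sum_const,
        nsmul_eq_mul]
      rw [majG, desG]
      push_cast
      ring
    rw [hsumf, hsum_lam, hcount]
    push_cast
    ring

end Paper
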